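/- Let V be a valuation domain and M a finitely generated V-submodule of V^n. Then the V-saturation Sat_{V,V^n}(M) of M in V^n is a free V-module of finite rank, and it is a direct summand of V^n: there exists a V-submodule P of V^n with Sat_{V,V^n}(M) ⊓ P = ⊥ and Sat_{V,V^n}(M) ⊔ P = ⊤. -/

import Mathlib

/-- In a valuation ring, any finite nonempty family has a member dividing all others. -/
lemma ValuationRing.exists_dvd_all' {V : Type*} [CommRing V] [IsDomain V] [ValuationRing V] :
    ∀ (n : ℕ) (a : Fin (n + 1) → V), ∃ j, ∀ i, a j ∣ a i := by
  intro n
  induction n with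
  | zero =>
    intro a
    exact ⟨0, fun i => by fin_cases i; exact dvd_rfl⟩
  | succ m ih =>
    intro a
    obtain ⟨j, hj⟩ := ih (fun i => a i.castSucc)
    rcases ValuationRing.dvd_total (a j.castSucc) (a (Fin.last _)) with h | h
    · refine ⟨j.castSucc, fun i => ?_⟩
      refine Fin.lastCases h (fun k => hj k) i
    · refine ⟨Fin.last _, fun i => ?_⟩
      refine Fin.lastCases dvd_rfl (fun k => h.trans (hj k)) i

/-- A finitely generated torsion-free module over a valuation domain is free. -/
lemma free_of_span_valuation {V Q : Type*} [CommRing V] [IsDomain V] [ValuationRing V]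
    [AddCommGroup Q] [Module V Q] [NoZeroSMulDivisors V Q] :
    ∀ (n : ℕ) (x : Fin n → Q), Submodule.span V (Set.range x) = ⊤ → Module.Free V Q := by
  intro n
  induction n with
  | zero =>
    intro x hx
    have : Subsingleton Q := by
      refine subsingleton_of_forall_eq 0 fun y => ?_
      have : y ∈ Submodule.span V (Set.range x) := hx ▸ Submodule.mem_top
      rw [Set.range_eq_empty x, Submodule.span_empty, Submodule.mem_bot] at this
      exact this
    exact Module.Free.of_basis (Module.Basis.empty (ι := Fin 0) Q)
  | succ m ih =>
    intro x hx
    by_cases hli : LinearIndependent V x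
    · exact Module.Free.of_basis (Module.Basis.mk hli (by rw [hx]))
    · obtain ⟨a, hsum, j0, hj0⟩ := Fintype.not_linearIndependent_iff.mp hli
      obtain ⟨j, hj⟩ := ValuationRing.exists_dvd_all' m a
      have hajne : a j ≠ 0 := by
        intro h
        exact hj0 (zero_dvd_iff.mp (h ▸ hj j0))
      choose b hb using hj
      have key : a j • (∑ i, b i • x i) = 0 := by
        rw [Finset.smul_sum]
        simp_rw [smul_smul]
        calc ∑ i, (a j * b i) • x i = ∑ i, a i • x i := by
              refine Finset.sum_congr rfl fun i _ => by rw [← hb i]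
          _ = 0 := hsum
      have hrel : ∑ i, b i • x i = 0 := by
        rcases smul_eq_zero.mp key with h | h
        · exact absurd h hajne
        · exact h
      have hbj : b j = 1 := by
        have := hb j
        have h2 : a j * 1 = a j * b j := by rw [mul_one, ← this]
        exact (mul_left_cancel₀ hajne h2).symm
      have hxj : x j = -∑ i ∈ Finset.univ.erase j, b i • x i := by
        have h := Finset.add_sum_erase Finset.univ (fun i => b i • x i) (Finset.mem_univ j)
        rw [hrel] at h
        simp only [hbj, one_smul] at h
        exact eq_neg_of_add_eq_zero_left h
      have hmem : ∀ i, x i ∈ Submodule.span V (Set.range (x ∘ j.succAbove)) := by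
        intro i
        by_cases hij : i = j
        · subst hij
          rw [hxj]
          refine Submodule.neg_mem _ (Submodule.sum_mem _ fun k hk => ?_)
          refine Submodule.smul_mem _ _ (Submodule.subset_span ?_)
          obtain ⟨l, hl⟩ := Fin.exists_succAbove_eq (Finset.ne_of_mem_erase hk)
          exact ⟨l, by simp [hl]⟩
        · obtain ⟨l, hl⟩ := Fin.exists_succAbove_eq hij
          exact Submodule.subset_span ⟨l, by simp [hl]⟩
      have htop : Submodule.span V (Set.range (x ∘ j.succAbove)) = ⊤ := by
        rw [eq_top_iff, ← hx, Submodule.span_le]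
        rintro _ ⟨i, rfl⟩
        exact hmem i
      exact ih _ htop

/-- Over a valuation domain `V`, the `V`-saturation of a finitely generated
submodule of `V^n` is a finite free `V`-module and a direct summand of `V^n`. -/
theorem saturation_free_and_summand
    {V : Type*} [CommRing V] [IsDomain V] [ValuationRing V] {n : ℕ}
    (M : Submodule V (Fin n → V)) (hM : M.FG) :
    ∃ S P : Submodule V (Fin n → V),
      (∀ x : Fin n → V, x ∈ S ↔ ∃ a : V, a ≠ 0 ∧ a • x ∈ M) ∧
      Module.Free V S ∧ Module.Finite V S ∧
      S ⊓ P = ⊥ ∧ S ⊔ P = ⊤ := by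
  classical
  -- the saturation as a submodule
  let S : Submodule V (Fin n → V) :=
    { carrier := {x | ∃ a : V, a ≠ 0 ∧ a • x ∈ M}
      zero_mem' := ⟨1, one_ne_zero, by simp⟩
      add_mem' := by
        rintro x y ⟨a, ha, hax⟩ ⟨c, hc, hcy⟩
        refine ⟨a * c, mul_ne_zero ha hc, ?_⟩
        have : (a * c) • (x + y) = c • (a • x) + a • (c • y) := by
          rw [smul_add, mul_smul, smul_comm c a, mul_smul]
        rw [this]
        exact M.add_mem (M.smul_mem _ hax) (M.smul_mem _ hcy)
      smul_mem' := by
        rintro c x ⟨a, ha, hax⟩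
        exact ⟨a, ha, by rw [smul_comm]; exact M.smul_mem _ hax⟩ }
  have hS : ∀ x : Fin n → V, x ∈ S ↔ ∃ a : V, a ≠ 0 ∧ a • x ∈ M := fun x => Iff.rfl
  -- the quotient is torsion-free
  have tf : NoZeroSMulDivisors V ((Fin n → V) ⧸ S) := by
    constructor
    intro c q h
    by_cases hc : c = 0
    · exact Or.inl hc
    right
    obtain ⟨x, rfl⟩ := Submodule.Quotient.mk_surjective S q
    rw [← Submodule.Quotient.mk_smul, Submodule.Quotient.mk_eq_zero] at h
    rw [Submodule.Quotient.mk_eq_zero]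
    obtain ⟨a, ha, hax⟩ := h
    exact ⟨a * c, mul_ne_zero ha hc, by rwa [mul_smul]⟩
  -- the quotient is finitely generated, hence free
  obtain ⟨k, g, hg⟩ := Module.Finite.exists_fin (R := V) (M := (Fin n → V) ⧸ S)
  have hfreeQ : Module.Free V ((Fin n → V) ⧸ S) := free_of_span_valuation k g hg
  have hproj : Module.Projective V ((Fin n → V) ⧸ S) := Module.Projective.of_free
  -- split the quotient map
  obtain ⟨σ, hσ⟩ := Module.projective_lifting_property S.mkQ LinearMap.id
    (Submodule.Quotient.mk_surjective S)
  have hσ' : ∀ q, S.mkQ (σ q) = q := fun q => congrArg (· q) hσ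
  have hSne : NoZeroSMulDivisors V ↥S :=
    Function.Injective.noZeroSMulDivisors Subtype.val Subtype.val_injective rfl fun _ _ => rfl
  have hrange : LinearMap.range (LinearMap.id - σ ∘ₗ S.mkQ) = S := by
    apply le_antisymm
    · rintro _ ⟨x, rfl⟩
      have h2 : S.mkQ (x - σ (S.mkQ x)) = 0 := by rw [map_sub, hσ']; simp
      rw [Submodule.mkQ_apply, Submodule.Quotient.mk_eq_zero] at h2
      simpa using h2
    · intro x hx
      refine ⟨x, ?_⟩
      have h3 : S.mkQ x = 0 := by
        rw [Submodule.mkQ_apply, Submodule.Quotient.mk_eq_zero]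
        exact hx
      simp [h3]
  have hfin : Module.Finite V ↥S := by
    have := Module.Finite.range (R := V) (LinearMap.id - σ ∘ₗ S.mkQ)
    rwa [hrange] at this
  have hfreeS : Module.Free V ↥S := by
    obtain ⟨k', g', hg'⟩ := Module.Finite.exists_fin (R := V) (M := ↥S)
    exact free_of_span_valuation k' g' hg'
  refine ⟨S, LinearMap.range σ, hS, hfreeS, hfin, ?_, ?_⟩
  · -- S ⊓ range σ = ⊥
    rw [eq_bot_iff]
    rintro x ⟨hxS, q, rfl⟩
    have h0 : q = 0 := by
      rw [← hσ' q, Submodule.mkQ_apply, Submodule.Quotient.mk_eq_zero]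
      exact hxS
    simp [h0]
  · -- S ⊔ range σ = ⊤
    rw [eq_top_iff]
    intro x _
    have h1 : x - σ (S.mkQ x) ∈ S := by
      have h2 : S.mkQ (x - σ (S.mkQ x)) = 0 := by rw [map_sub, hσ']; simp
      rwa [Submodule.mkQ_apply, Submodule.Quotient.mk_eq_zero] at h2
    have hmem2 : σ (S.mkQ x) ∈ LinearMap.range σ := LinearMap.mem_range_self σ (S.mkQ x)
    have hx2 := Submodule.add_mem_sup h1 hmem2
    rwa [sub_add_cancel] at hx2
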